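/- Let h be a positive integer and let φ(x_1,…,x_h) = c_1x_1 + ⋯ + c_hx_h be a linear form with integer coefficients satisfying condition N. Let A be a φ-Sidon set of integers with exactly n elements (n ≥ 1). Then the number of integers b ∉ A such that A ∪ {b} is not a φ-Sidon set is less than 4^h · n^(2h−1). -/

import Mathlib

/-- `A` is a Sidon set for the linear form `φ(x₁,…,x_h) = c₁x₁ + ⋯ + c_hx_h`
with integer coefficients `c`. -/
def IsSidon {h : ℕ} (c : Fin h → ℤ) (A : Set ℤ) : Prop :=
  ∀ a a' : Fin h → ℤ, (∀ i, a i ∈ A) → (∀ i, a' i ∈ A) →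
    (∑ i, c i * a i) = (∑ i, c i * a' i) → a = a'

/-- The linear form with coefficients `c` satisfies condition N. -/
def ConditionN {h : ℕ} (c : Fin h → ℤ) : Prop :=
  ¬ ∃ I₁ I₂ : Finset (Fin h), Disjoint I₁ I₂ ∧ (I₁.Nonempty ∨ I₂.Nonempty) ∧
      ∑ i ∈ I₁, c i = ∑ i ∈ I₂, c i

/-- For a φ-Sidon set `A` with `n` elements, the set of integers `b ∉ A` such that
`A ∪ {b}` is not a φ-Sidon set is finite of size less than `4^h · n^(2h-1)`. -/
private lemma sum_split {h : ℕ} (c a : Fin h → ℤ) (p : Fin h → Prop) [DecidablePred p]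
    (v : ℤ) (hv : ∀ i, p i → a i = v) :
    ∑ i, c i * a i
      = (∑ i ∈ Finset.univ.filter p, c i) * v
        + ∑ i ∈ Finset.univ \ Finset.univ.filter p, c i * a i := by
  have h1 : ∑ i, c i * a i = ∑ i, (if p i then c i * v else c i * a i) :=
    Finset.sum_congr rfl (fun i _ => by by_cases hp : p i <;> simp [hp, hv i])
  rw [h1, Finset.sum_ite, ← Finset.sum_mul, Finset.filter_not]

theorem statement9 {h : ℕ} (hh : 0 < h) (c : Fin h → ℤ) (hN : ConditionN c)
    (A : Finset ℤ) (n : ℕ) (hn : 1 ≤ n) (hcard : A.card = n)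
    (hSidon : IsSidon c (A : Set ℤ)) :
    {b : ℤ | b ∉ A ∧ ¬ IsSidon c (insert b (A : Set ℤ))}.Finite ∧
      {b : ℤ | b ∉ A ∧ ¬ IsSidon c (insert b (A : Set ℤ))}.ncard
        < 4 ^ h * n ^ (2 * h - 1) := by
  obtain ⟨a₀, ha₀⟩ : A.Nonempty := Finset.card_pos.mp (by omega)
  set pairs : Finset (Finset (Fin h) × Finset (Fin h)) :=
    (Finset.univ ×ˢ Finset.univ).filter (fun p => p.1 ≠ p.2) with hpairs
  set E : Finset (Fin h) → Finset (Fin h → ℤ) :=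
    fun I => Fintype.piFinset (fun i => if i ∈ I then ({a₀} : Finset ℤ) else A) with hE
  set Φ : Finset (Fin h) → Finset (Fin h) → (Fin h → ℤ) → (Fin h → ℤ) → ℤ :=
    fun I I' f g =>
      (∑ i ∈ Finset.univ \ I', c i * g i - ∑ i ∈ Finset.univ \ I, c i * f i)
        / (∑ i ∈ I, c i - ∑ i ∈ I', c i) with hΦ
  set B : Finset ℤ :=
    pairs.biUnion (fun p => ((E p.1) ×ˢ (E p.2)).image (fun fg => Φ p.1 p.2 fg.1 fg.2)) with hB
  have hsub : {b : ℤ | b ∉ A ∧ ¬ IsSidon c (insert b (A : Set ℤ))} ⊆ ↑B := by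
    rintro b ⟨hbA, hns⟩
    rw [IsSidon] at hns
    push_neg at hns
    obtain ⟨a, a', haA, ha'A, hsum, hne⟩ := hns
    set Ia : Finset (Fin h) := Finset.univ.filter (fun i => a i = b) with hIa
    set Ia' : Finset (Fin h) := Finset.univ.filter (fun i => a' i = b) with hIa'
    set f : Fin h → ℤ := fun i => if a i = b then a₀ else a i with hfdef
    set g : Fin h → ℤ := fun i => if a' i = b then a₀ else a' i with hgdef
    have hfA : ∀ i, f i ∈ (A : Set ℤ) := by
      intro i
      by_cases hi : a i = b
      · simpa [hfdef, hi] using ha₀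
      · rcases Set.mem_insert_iff.mp (haA i) with h1 | h1
        · exact absurd h1 hi
        · simpa [hfdef, hi] using h1
    have hgA : ∀ i, g i ∈ (A : Set ℤ) := by
      intro i
      by_cases hi : a' i = b
      · simpa [hgdef, hi] using ha₀
      · rcases Set.mem_insert_iff.mp (ha'A i) with h1 | h1
        · exact absurd h1 hi
        · simpa [hgdef, hi] using h1
    have keya : ∑ i, c i * a i
        = (∑ i ∈ Ia, c i) * b + ∑ i ∈ Finset.univ \ Ia, c i * a i := by
      rw [hIa]; exact sum_split c a (fun i => a i = b) b (fun i hi => hi)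
    have keya' : ∑ i, c i * a' i
        = (∑ i ∈ Ia', c i) * b + ∑ i ∈ Finset.univ \ Ia', c i * a' i := by
      rw [hIa']; exact sum_split c a' (fun i => a' i = b) b (fun i hi => hi)
    have keyf : ∑ i, c i * f i
        = (∑ i ∈ Ia, c i) * a₀ + ∑ i ∈ Finset.univ \ Ia, c i * f i := by
      rw [hIa]
      exact sum_split c f (fun i => a i = b) a₀ (fun i hi => by simp [hfdef, hi])
    have keyg : ∑ i, c i * g i
        = (∑ i ∈ Ia', c i) * a₀ + ∑ i ∈ Finset.univ \ Ia', c i * g i := by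
      rw [hIa']
      exact sum_split c g (fun i => a' i = b) a₀ (fun i hi => by simp [hgdef, hi])
    have ef : ∑ i ∈ Finset.univ \ Ia, c i * f i = ∑ i ∈ Finset.univ \ Ia, c i * a i := by
      refine Finset.sum_congr rfl (fun i hi => ?_)
      have : ¬ a i = b := by
        have := (Finset.mem_sdiff.mp hi).2
        simpa [hIa] using this
      simp [hfdef, this]
    have eg : ∑ i ∈ Finset.univ \ Ia', c i * g i = ∑ i ∈ Finset.univ \ Ia', c i * a' i := by
      refine Finset.sum_congr rfl (fun i hi => ?_)
      have : ¬ a' i = b := by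
        have := (Finset.mem_sdiff.mp hi).2
        simpa [hIa'] using this
      simp [hgdef, this]
    have hII : Ia ≠ Ia' := by
      intro hEq
      apply hne
      have hSeq : (∑ i ∈ Ia, c i) = ∑ i ∈ Ia', c i := by rw [hEq]
      have hT : ∑ i ∈ Finset.univ \ Ia, c i * a i
          = ∑ i ∈ Finset.univ \ Ia', c i * a' i := by
        rw [keya, keya', hSeq] at hsum
        linarith
      have hfg : f = g := by
        apply hSidon _ _ hfA hgA
        rw [keyf, keyg, ef, eg, hSeq, hT]
      funext i
      by_cases hi : a i = b
      · by_cases hi' : a' i = b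
        · rw [hi, hi']
        · exfalso
          have hmem : i ∈ Ia := by simp [hIa, hi]
          rw [hEq] at hmem
          exact hi' (by simpa [hIa'] using hmem)
      · by_cases hi' : a' i = b
        · exfalso
          have hmem : i ∈ Ia' := by simp [hIa', hi']
          rw [← hEq] at hmem
          exact hi (by simpa [hIa] using hmem)
        · have := congrFun hfg i
          simpa [hfdef, hgdef, hi, hi'] using this
    have hd : (∑ i ∈ Ia, c i) - (∑ i ∈ Ia', c i) ≠ 0 := by
      intro h0
      apply hN
      refine ⟨Ia \ Ia', Ia' \ Ia, disjoint_sdiff_sdiff, ?_, ?_⟩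
      · by_contra hcon
        push_neg at hcon
        obtain ⟨h1, h2⟩ := hcon
        rw [Finset.sdiff_eq_empty_iff_subset] at h1 h2
        exact hII (Finset.Subset.antisymm h1 h2)
      · have e1 : ∑ i ∈ Ia \ Ia', c i = ∑ i ∈ Ia, c i - ∑ i ∈ Ia ∩ Ia', c i := by
          rw [← Finset.sdiff_inter_self_left]
          exact Finset.sum_sdiff_eq_sub Finset.inter_subset_left
        have e2 : ∑ i ∈ Ia' \ Ia, c i = ∑ i ∈ Ia', c i - ∑ i ∈ Ia' ∩ Ia, c i := by
          rw [← Finset.sdiff_inter_self_left]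
          exact Finset.sum_sdiff_eq_sub Finset.inter_subset_left
        have e3 : Ia' ∩ Ia = Ia ∩ Ia' := Finset.inter_comm _ _
        rw [e3] at e2
        rw [e1, e2]
        linarith
    refine Finset.mem_coe.mpr (Finset.mem_biUnion.mpr ⟨(Ia, Ia'), ?_, ?_⟩)
    · rw [hpairs]
      exact Finset.mem_filter.mpr
        ⟨Finset.mem_product.mpr ⟨Finset.mem_univ _, Finset.mem_univ _⟩, hII⟩
    · refine Finset.mem_image.mpr ⟨(f, g), Finset.mem_product.mpr ⟨?_, ?_⟩, ?_⟩
      · show f ∈ E Ia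
        rw [hE]
        refine Fintype.mem_piFinset.mpr (fun i => ?_)
        by_cases hi : a i = b
        · simp [hIa, hfdef, hi, Finset.mem_filter]
        · simpa [hIa, hfdef, hi, Finset.mem_filter] using hfA i
      · show g ∈ E Ia'
        rw [hE]
        refine Fintype.mem_piFinset.mpr (fun i => ?_)
        by_cases hi : a' i = b
        · simp [hIa', hgdef, hi, Finset.mem_filter]
        · simpa [hIa', hgdef, hi, Finset.mem_filter] using hgA i
      · show Φ Ia Ia' f g = b
        rw [hΦ]
        have hmul : ∑ i ∈ Finset.univ \ Ia', c i * g i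
            - ∑ i ∈ Finset.univ \ Ia, c i * f i
            = ((∑ i ∈ Ia, c i) - (∑ i ∈ Ia', c i)) * b := by
          have hs := hsum
          rw [keya, keya'] at hs
          rw [ef, eg]
          linear_combination -hs
        simp only
        rw [hmul]
        exact Int.mul_ediv_cancel_left _ hd
  have hEcard : ∀ I : Finset (Fin h), (E I).card = n ^ (h - I.card) := by
    intro I
    rw [hE]
    rw [Fintype.card_piFinset]
    have hc : ∀ i, (if i ∈ I then ({a₀} : Finset ℤ) else A).card = if i ∈ I then 1 else n :=
      fun i => by split <;> simp [hcard]
    rw [Finset.prod_congr rfl (fun i _ => hc i), Finset.prod_ite, Finset.prod_const,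
      Finset.prod_const, one_pow, one_mul]
    congr 1
    have hfI : Finset.univ.filter (fun i => i ∈ I) = I := by ext i; simp
    rw [Finset.filter_not, Finset.card_sdiff_of_subset (Finset.filter_subset _ _), hfI]
    simp
  have hcardB : B.card < 4 ^ h * n ^ (2 * h - 1) := by
    have hpow : 0 < n ^ (2 * h - 1) := Nat.pow_pos (by omega)
    have hper : ∀ p ∈ pairs,
        (((E p.1) ×ˢ (E p.2)).image (fun fg => Φ p.1 p.2 fg.1 fg.2)).card
          ≤ n ^ (2 * h - 1) := by
      intro p hp
      have hne : p.1 ≠ p.2 := (Finset.mem_filter.mp hp).2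
      calc (((E p.1) ×ˢ (E p.2)).image (fun fg => Φ p.1 p.2 fg.1 fg.2)).card
          ≤ ((E p.1) ×ˢ (E p.2)).card := Finset.card_image_le
        _ = (E p.1).card * (E p.2).card := Finset.card_product _ _
        _ = n ^ ((h - p.1.card) + (h - p.2.card)) := by
            rw [hEcard, hEcard, pow_add]
        _ ≤ n ^ (2 * h - 1) := by
            apply Nat.pow_le_pow_right (by omega)
            have h1 : p.1.card ≤ h := by
              simpa using Finset.card_le_card (Finset.subset_univ p.1)
            have h2 : p.2.card ≤ h := by
              simpa using Finset.card_le_card (Finset.subset_univ p.2)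
            have h3 : 1 ≤ p.1.card ∨ 1 ≤ p.2.card := by
              by_contra hcon
              push_neg at hcon
              apply hne
              have e1 : p.1 = ∅ := Finset.card_eq_zero.mp (by omega)
              have e2 : p.2 = ∅ := Finset.card_eq_zero.mp (by omega)
              rw [e1, e2]
            omega
    have hpc : pairs.card < 4 ^ h := by
      have hss : pairs ⊂ Finset.univ ×ˢ Finset.univ :=
        Finset.filter_ssubset.mpr ⟨(∅, ∅), by simp⟩
      have := Finset.card_lt_card hss
      rwa [Finset.card_product, Finset.card_univ, Fintype.card_finset,
        Fintype.card_fin, ← mul_pow, show (2 * 2 : ℕ) = 4 from rfl] at this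
    calc B.card ≤ ∑ p ∈ pairs,
          (((E p.1) ×ˢ (E p.2)).image (fun fg => Φ p.1 p.2 fg.1 fg.2)).card :=
          Finset.card_biUnion_le
      _ ≤ ∑ _p ∈ pairs, n ^ (2 * h - 1) := Finset.sum_le_sum hper
      _ = pairs.card * n ^ (2 * h - 1) := by rw [Finset.sum_const, smul_eq_mul]
      _ < 4 ^ h * n ^ (2 * h - 1) := by
          exact (Nat.mul_lt_mul_right hpow).mpr hpc
  refine ⟨Set.Finite.subset B.finite_toSet hsub, lt_of_le_of_lt ?_ hcardB⟩
  calc _ ≤ (↑B : Set ℤ).ncard := Set.ncard_le_ncard hsub B.finite_toSet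
    _ = B.card := Set.ncard_coe_finset B
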